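/- (Free representation of an automaton.) Let T be a monad on Type, ρ : T ∘ F ⟹ F ∘ T a natural transformation, (X, χ) a T-algebra carrying a T-automaton structure δ : X → O × (A → X), and g : G → X a set of generators with a chosen right inverse s : X → T G of g^♯. Define γ := (Prod.map id (s ∘ ·)) ∘ δ ∘ g : G → O × (A → T G). Then the deterministic automaton (T G, γ^♯) accepts the same languages through s: for every x ∈ X, l_{T G}(s(x)) = l_X(x); in particular, for any initial state i : 1 → X, the automaton (T G, s ∘ i, γ^♯) accepts the same language as (X, i, δ). -/

import Mathlib

open CategoryTheory

universe u

/-- The language map of a deterministic automaton `(X, δ)` with outputs in `O`. -/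
def detLang {A O X : Type u} (δ : X → O × (A → X)) : X → List A → O
  | x, [] => (δ x).1
  | x, a :: w => detLang δ ((δ x).2 a) w

/-- The free `T`-extension of `h : Y → F (T Y)`, where `F X = O × (A → X)`,
with respect to a distributive-law-like family `ρ : T ∘ F ⟹ F ∘ T`:
`h^♯ = F μ_Y ∘ ρ_{T Y} ∘ T h`. -/
def freeExtAut {T : Monad (Type u)} {A O : Type u}
    (ρ : ∀ X : Type u, T.toFunctor.obj (O × (A → X)) → O × (A → T.toFunctor.obj X))
    {Y : Type u} (h : Y → O × (A → T.toFunctor.obj Y)) :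
    T.toFunctor.obj Y → O × (A → T.toFunctor.obj Y) :=
  Prod.map (id : O → O)
      (fun k : A → T.toFunctor.obj (T.toFunctor.obj Y) => T.μ.app Y ∘ k)
    ∘ ρ (T.toFunctor.obj Y) ∘ T.toFunctor.map (TypeCat.ofHom h)

/-- Languages are preserved by automaton homomorphisms. -/
lemma detLang_hom {A O Y Z : Type u} (d1 : Y → O × (A → Y)) (d2 : Z → O × (A → Z))
    (f : Y → Z) (h : d2 ∘ f = Prod.map (id : O → O) (fun k : A → Y => f ∘ k) ∘ d1) :
    ∀ (w : List A) (y : Y), detLang d2 (f y) w = detLang d1 y w := by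
  intro w
  induction w with
  | nil =>
      intro y
      have := congrFun h y
      simp only [Function.comp_apply] at this
      simp [detLang, this]
  | cons a w ih =>
      intro y
      have := congrFun h y
      simp only [Function.comp_apply] at this
      simp only [detLang, this]
      exact ih ((d1 y).2 a)

theorem free_representation
    (T : Monad (Type u)) (A O : Type u)
    (ρ : ∀ X : Type u, T.toFunctor.obj (O × (A → X)) → O × (A → T.toFunctor.obj X))
    (hρnat : ∀ (X Y : Type u) (f : X → Y),
      ρ Y ∘ T.toFunctor.map (TypeCat.ofHom (Prod.map (id : O → O) (fun k : A → X => f ∘ k)))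
        = Prod.map (id : O → O)
            (fun k : A → T.toFunctor.obj X => T.toFunctor.map (TypeCat.ofHom f) ∘ k) ∘ ρ X)
    (X : Type u) (χ : T.toFunctor.obj X → X)
    (hunit : χ ∘ T.η.app X = id)
    (hassoc : χ ∘ T.μ.app X = χ ∘ T.toFunctor.map (TypeCat.ofHom χ))
    (δ : X → O × (A → X))
    (hδ : δ ∘ χ
      = Prod.map (id : O → O) (fun k : A → T.toFunctor.obj X => χ ∘ k)
          ∘ ρ X ∘ T.toFunctor.map (TypeCat.ofHom δ))
    (G : Type u) (g : G → X) (s : X → T.toFunctor.obj G)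
    (hs : (χ ∘ T.toFunctor.map (TypeCat.ofHom g)) ∘ s = id) :
    (∀ x : X,
      detLang (freeExtAut ρ (Prod.map (id : O → O) (fun k : A → X => s ∘ k) ∘ δ ∘ g))
          (s x)
        = detLang δ x)
    ∧ ∀ i : PUnit.{u + 1} → X,
        detLang (freeExtAut ρ (Prod.map (id : O → O) (fun k : A → X => s ∘ k) ∘ δ ∘ g))
            (s (i PUnit.unit))
          = detLang δ (i PUnit.unit) := by
  set γ : G → O × (A → T.toFunctor.obj G) :=
    Prod.map (id : O → O) (fun k : A → X => s ∘ k) ∘ δ ∘ g with hγ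
  set gs : T.toFunctor.obj G → X := χ ∘ T.toFunctor.map (TypeCat.ofHom g) with hgs
  -- general lemma: Prod.map id (f ∘ ·) composes
  have Fcomp : ∀ {U V W : Type u} (f1 : U → V) (f2 : V → W),
      Prod.map (id : O → O) (fun k : A → V => f2 ∘ k)
        ∘ Prod.map (id : O → O) (fun k : A → U => f1 ∘ k)
      = Prod.map (id : O → O) (fun k : A → U => (f2 ∘ f1) ∘ k) := by
    intro U V W f1 f2; rfl
  have Tcomp : ∀ {U V W : Type u} (f1 : U → V) (f2 : V → W),
      T.toFunctor.map (TypeCat.ofHom (f2 ∘ f1)) = T.toFunctor.map (TypeCat.ofHom f2) ∘ T.toFunctor.map (TypeCat.ofHom f1) := by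
    intro U V W f1 f2
    funext x
    exact T.toFunctor.map_comp_apply (TypeCat.ofHom f1) (TypeCat.ofHom f2) x
  -- μ naturality
  have μnat : T.toFunctor.map (TypeCat.ofHom g) ∘ T.μ.app G
      = T.μ.app X ∘ T.toFunctor.map (TypeCat.ofHom (T.toFunctor.map (TypeCat.ofHom g))) := by
    funext x
    exact (ConcreteCategory.congr_hom (T.μ.naturality (TypeCat.ofHom g)) x).symm
  -- gs ∘ μ = χ ∘ T gs
  have step1 : gs ∘ T.μ.app G = χ ∘ T.toFunctor.map (TypeCat.ofHom gs) := by
    calc gs ∘ T.μ.app G = χ ∘ (T.toFunctor.map (TypeCat.ofHom g) ∘ T.μ.app G) := rfl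
      _ = (χ ∘ T.μ.app X) ∘ T.toFunctor.map (TypeCat.ofHom (T.toFunctor.map (TypeCat.ofHom g))) := by
          rw [μnat]; rfl
      _ = (χ ∘ T.toFunctor.map (TypeCat.ofHom χ)) ∘ T.toFunctor.map (TypeCat.ofHom (T.toFunctor.map (TypeCat.ofHom g))) := by
          rw [hassoc]
      _ = χ ∘ T.toFunctor.map (TypeCat.ofHom gs) := by
          rw [hgs, Tcomp (T.toFunctor.map (TypeCat.ofHom g)) χ]; rfl
  have key2 : Prod.map (id : O → O) (fun k : A → T.toFunctor.obj G => gs ∘ k)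
      ∘ freeExtAut ρ γ = δ ∘ gs := by
    have h1 : Prod.map (id : O → O)
        (fun k : A → T.toFunctor.obj G => gs ∘ k) ∘ γ = δ ∘ g := by
      rw [hγ, ← Function.comp_assoc, ← Function.comp_assoc, Fcomp, hs]
      rfl
    calc Prod.map (id : O → O) (fun k : A → T.toFunctor.obj G => gs ∘ k)
          ∘ freeExtAut ρ γ
        = Prod.map (id : O → O)
            (fun k : A → T.toFunctor.obj (T.toFunctor.obj G) =>
              (gs ∘ T.μ.app G) ∘ k)
            ∘ (ρ (T.toFunctor.obj G) ∘ T.toFunctor.map (TypeCat.ofHom γ)) := rfl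
      _ = Prod.map (id : O → O)
            (fun k : A → T.toFunctor.obj (T.toFunctor.obj G) =>
              (χ ∘ T.toFunctor.map (TypeCat.ofHom gs)) ∘ k)
            ∘ (ρ (T.toFunctor.obj G) ∘ T.toFunctor.map (TypeCat.ofHom γ)) := by rw [step1]
      _ = Prod.map (id : O → O) (fun k : A → T.toFunctor.obj X => χ ∘ k)
            ∘ (Prod.map (id : O → O)
                (fun k : A → T.toFunctor.obj (T.toFunctor.obj G) =>
                  T.toFunctor.map (TypeCat.ofHom gs) ∘ k)
              ∘ ρ (T.toFunctor.obj G)) ∘ T.toFunctor.map (TypeCat.ofHom γ) := rfl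
      _ = Prod.map (id : O → O) (fun k : A → T.toFunctor.obj X => χ ∘ k)
            ∘ (ρ X ∘ T.toFunctor.map
                (TypeCat.ofHom (Prod.map (id : O → O)
                  (fun k : A → T.toFunctor.obj G => gs ∘ k))))
            ∘ T.toFunctor.map (TypeCat.ofHom γ) := by
          rw [hρnat (T.toFunctor.obj G) X gs]
      _ = Prod.map (id : O → O) (fun k : A → T.toFunctor.obj X => χ ∘ k)
            ∘ ρ X ∘ T.toFunctor.map
              (TypeCat.ofHom (Prod.map (id : O → O)
                (fun k : A → T.toFunctor.obj G => gs ∘ k) ∘ γ)) := by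
          rw [Tcomp γ
            (Prod.map (id : O → O) (fun k : A → T.toFunctor.obj G => gs ∘ k))]
          rfl
      _ = Prod.map (id : O → O) (fun k : A → T.toFunctor.obj X => χ ∘ k)
            ∘ ρ X ∘ T.toFunctor.map (TypeCat.ofHom (δ ∘ g)) := by rw [h1]
      _ = ((Prod.map (id : O → O) (fun k : A → T.toFunctor.obj X => χ ∘ k)
            ∘ ρ X) ∘ T.toFunctor.map (TypeCat.ofHom δ)) ∘ T.toFunctor.map (TypeCat.ofHom g) := by
          rw [Tcomp g δ]
          rfl
      _ = (δ ∘ χ) ∘ T.toFunctor.map (TypeCat.ofHom g) := by rw [hδ]; rfl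
      _ = δ ∘ gs := rfl
  have key : δ ∘ gs
      = Prod.map (id : O → O) (fun k : A → T.toFunctor.obj G => gs ∘ k)
          ∘ freeExtAut ρ γ := key2.symm
  have main : ∀ x : X, detLang (freeExtAut ρ γ) (s x) = detLang δ x := by
    intro x
    funext w
    have := detLang_hom (freeExtAut ρ γ) δ gs key w (s x)
    have hsx : gs (s x) = x := congrFun hs x
    rw [hsx] at this
    exact this.symm
  exact ⟨main, fun i => main (i PUnit.unit)⟩
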